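/- Let D be a divisible abelian 2-group with the inversion automorphism α, and let G = D ⋊ ⟨α⟩. Then the subgroup ⟨α⟩ is a proper contranormal subgroup of G, and G is hypercentral. -/

import Mathlib

/-- A group is hypercentral if it admits a transfinite ascending central series from `⊥`
to `⊤`, continuous at limit ordinals (equivalently, the transfinite upper central series
reaches the whole group). -/
def IsHypercentral (G : Type*) [Group G] : Prop :=
  ∃ (γ : Ordinal.{0}) (f : Ordinal.{0} → Subgroup G),
    f 0 = ⊥ ∧ f γ = ⊤ ∧ Monotone f ∧
    (∀ α < γ, ∀ x ∈ f (α + 1), ∀ g : G, x * g * x⁻¹ * g⁻¹ ∈ f α) ∧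
    (∀ α ≤ γ, Order.IsSuccLimit α → f α = ⨆ β < α, f β)

section Aux

open SemidirectProduct

variable {D : Type*} [CommGroup D]

/-- Any element of the subgroup generated by the inversion automorphism acts either as
identity or as inversion. -/
lemma inv_aut_apply (α : MulAut D) (hα : ∀ d : D, α d = d⁻¹) {t : MulAut D}
    (ht : t ∈ Subgroup.zpowers α) (d : D) : t d = d ∨ t d = d⁻¹ := by
  obtain ⟨m, rfl⟩ := ht
  show (α ^ m) d = d ∨ (α ^ m) d = d⁻¹
  have hsq : α * α = 1 := by
    ext x
    simp [hα]
  rcases Int.even_or_odd m with ⟨k, hk⟩ | ⟨k, hk⟩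
  · left
    have h1 : α ^ m = 1 := by
      rw [hk, ← two_mul, zpow_mul, zpow_two, hsq, one_zpow]
    rw [h1]; rfl
  · right
    have h1 : α ^ m = α := by
      rw [hk, zpow_add, zpow_one, zpow_mul, zpow_two, hsq, one_zpow, one_mul]
    rw [h1, hα]

lemma pow_two_pow_mono {x : D} {n k : ℕ} (h : x ^ 2 ^ n = 1) (hnk : n ≤ k) :
    x ^ 2 ^ k = 1 := by
  rw [show 2 ^ k = 2 ^ n * 2 ^ (k - n) by rw [← pow_add, Nat.add_sub_cancel' hnk],
    pow_mul, h, one_pow]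

/-- The candidate upper central series restricted to the abelian part. -/
def sdSeries {H : Type*} [Group H] (φ : H →* MulAut D) (o : Ordinal.{0}) :
    Subgroup (D ⋊[φ] H) where
  carrier := {x | x.right = 1 ∧ ∃ n : ℕ, (n : Ordinal) ≤ o ∧ x.left ^ 2 ^ n = 1}
  one_mem' := ⟨rfl, 0, by simp, by simp⟩
  mul_mem' := by
    rintro a b ⟨ha1, n, hn, hpa⟩ ⟨hb1, m, hm, hpb⟩
    refine ⟨by simp [mul_right, ha1, hb1], max n m, ?_, ?_⟩
    · rcases le_total n m with h | h
      · rwa [Nat.max_eq_right h]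
      · rwa [Nat.max_eq_left h]
    · have hl : (a * b).left = a.left * b.left := by
        simp [mul_left, ha1]
      rw [hl, mul_pow, pow_two_pow_mono hpa (le_max_left n m),
        pow_two_pow_mono hpb (le_max_right n m), one_mul]
  inv_mem' := by
    rintro a ⟨ha1, n, hn, hpa⟩
    refine ⟨by simp [inv_right, ha1], n, hn, ?_⟩
    have hl : a⁻¹.left = a.left⁻¹ := by
      simp [inv_left, ha1]
    rw [hl, inv_pow, hpa, inv_one]

lemma mem_sdSeries {H : Type*} [Group H] (φ : H →* MulAut D) (o : Ordinal.{0})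
    (x : D ⋊[φ] H) :
    x ∈ sdSeries φ o ↔ x.right = 1 ∧ ∃ n : ℕ, (n : Ordinal) ≤ o ∧ x.left ^ 2 ^ n = 1 :=
  Iff.rfl

lemma sdSeries_mono {H : Type*} [Group H] (φ : H →* MulAut D) {o₁ o₂ : Ordinal.{0}}
    (h : o₁ ≤ o₂) : sdSeries φ o₁ ≤ sdSeries φ o₂ := by
  rintro x ⟨h1, n, hn, hp⟩
  exact ⟨h1, n, hn.trans h, hp⟩

/-- The full candidate upper central series. -/
noncomputable def fullSeries {H : Type*} [Group H] (φ : H →* MulAut D) (o : Ordinal.{0}) :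
    Subgroup (D ⋊[φ] H) :=
  if o ≤ Ordinal.omega0 then sdSeries φ o else ⊤

lemma fullSeries_of_le {H : Type*} [Group H] (φ : H →* MulAut D) {o : Ordinal.{0}}
    (h : o ≤ Ordinal.omega0) : fullSeries φ o = sdSeries φ o := if_pos h

lemma fullSeries_of_not_le {H : Type*} [Group H] (φ : H →* MulAut D) {o : Ordinal.{0}}
    (h : ¬ o ≤ Ordinal.omega0) : fullSeries φ o = ⊤ := if_neg h

/-- The commutator of an element with trivial right component. -/
lemma comm_left {H : Type*} [Group H] (φ : H →* MulAut D) (x g : D ⋊[φ] H)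
    (hx1 : x.right = 1) :
    (x * g * x⁻¹ * g⁻¹).left = x.left * (φ g.right) x.left⁻¹ := by
  simp only [mul_left, mul_right, inv_left, inv_right, hx1, map_one, map_inv,
    MulAut.one_apply, one_mul, mul_one, inv_one]
  rw [MulAut.apply_inv_self]
  rw [mul_right_comm, mul_inv_cancel_right]

end Aux

/-- Let `D` be a nontrivial divisible abelian 2-group, `α` its inversion automorphism and
`G = D ⋊ ⟨α⟩`. Then `⟨α⟩` is a proper contranormal subgroup of `G`, and `G` is
hypercentral. -/
theorem inversion_contranormal_and_hypercentral {D : Type*} [CommGroup D] [Nontrivial D]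
    (h2 : ∀ d : D, ∃ n : ℕ, d ^ (2 ^ n) = 1)
    (hdiv : ∀ d : D, ∃ e : D, e * e = d)
    (α : MulAut D) (hα : ∀ d : D, α d = d⁻¹) :
    ((SemidirectProduct.inr :
        (Subgroup.zpowers α) →* D ⋊[(Subgroup.zpowers α).subtype] (Subgroup.zpowers α)).range ≠ ⊤ ∧
      Subgroup.normalClosure
        ((SemidirectProduct.inr :
            (Subgroup.zpowers α) →* D ⋊[(Subgroup.zpowers α).subtype] (Subgroup.zpowers α)).range :
          Set (D ⋊[(Subgroup.zpowers α).subtype] (Subgroup.zpowers α))) = ⊤) ∧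
    IsHypercentral (D ⋊[(Subgroup.zpowers α).subtype] (Subgroup.zpowers α)) := by
  open SemidirectProduct in
  set H := Subgroup.zpowers α with hH
  set φ := H.subtype with hφ
  -- commutators have trivial right component
  have hHcomm : ∀ s t : H, s * t * s⁻¹ * t⁻¹ = 1 := by
    intro s t
    have : s * t = t * s := by
      obtain ⟨_, a, rfl⟩ := s
      obtain ⟨_, b, rfl⟩ := t
      exact Subtype.ext ((Commute.refl α).zpow_zpow a b)
    rw [this]
    group
  refine ⟨⟨?_, ?_⟩, ?_⟩
  · -- properness
    intro htop
    obtain ⟨d, hd⟩ := exists_ne (1 : D)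
    have hmem : (inl d : D ⋊[φ] H) ∈ (inr : H →* D ⋊[φ] H).range := htop ▸ Subgroup.mem_top _
    obtain ⟨s, hs⟩ := hmem
    have := congrArg SemidirectProduct.left hs
    simp only [left_inr, left_inl] at this
    exact hd this.symm
  · -- contranormality
    rw [eq_top_iff]
    intro x _
    rw [← inl_left_mul_inr_right x]
    have hN := Subgroup.normalClosure_normal
      (s := ((inr : H →* D ⋊[φ] H).range : Set (D ⋊[φ] H)))
    apply mul_mem
    · obtain ⟨e, he⟩ := hdiv x.left
      set a : H := ⟨α, Subgroup.mem_zpowers α⟩ with ha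
      have hmema : (inr a : D ⋊[φ] H) ∈ Subgroup.normalClosure
          ((inr : H →* D ⋊[φ] H).range : Set (D ⋊[φ] H)) :=
        Subgroup.subset_normalClosure ⟨a, rfl⟩
      have hφa : ∀ y : D, φ a y = y⁻¹ := fun y => hα y
      have key : (inl x.left : D ⋊[φ] H) = (inl e * inr a * (inl e)⁻¹) * (inr a)⁻¹ := by
        ext
        · simp [mul_left, mul_right, inv_left, inv_right, hφa, ← he, mul_assoc]
        · simp [mul_left, mul_right, inv_left, inv_right]
      rw [key]
      exact mul_mem (hN.conj_mem _ hmema _) (inv_mem hmema)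
    · exact Subgroup.subset_normalClosure ⟨x.right, rfl⟩
  · -- hypercentrality
    classical
    refine ⟨Ordinal.omega0 + 1, fullSeries φ, ?_, ?_, ?_, ?_, ?_⟩
    · -- f 0 = ⊥
      rw [fullSeries_of_le φ (zero_le)]
      ext x
      simp only [mem_sdSeries, Subgroup.mem_bot]
      constructor
      · rintro ⟨h1, n, hn, hp⟩
        have hn0 : n = 0 := by
          have := nonpos_iff_eq_zero.mp hn
          exact_mod_cast this
        subst hn0
        simp only [pow_zero, pow_one] at hp
        rw [← SemidirectProduct.inl_left_mul_inr_right x, hp, h1]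
        simp
      · rintro rfl
        exact ⟨rfl, 0, by simp, by simp⟩
    · -- f γ = ⊤
      rw [fullSeries_of_not_le φ]
      simp only [not_le]
      exact lt_add_one _
    · -- monotone
      intro a b hab
      by_cases hb : b ≤ Ordinal.omega0
      · rw [fullSeries_of_le φ (hab.trans hb), fullSeries_of_le φ hb]
        exact sdSeries_mono φ hab
      · rw [fullSeries_of_not_le φ hb]
        exact le_top
    · -- central steps
      intro β hβ x hx g
      have hβω : β ≤ Ordinal.omega0 := by
        rw [Ordinal.add_one_eq_succ] at hβ
        exact Order.lt_succ_iff.mp hβ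
      rcases lt_or_eq_of_le hβω with hlt | rfl
      · -- β < ω
        have hβ1 : β + 1 ≤ Ordinal.omega0 := by
          rw [Ordinal.add_one_eq_succ]
          exact (Ordinal.isSuccLimit_omega0.succ_lt hlt).le
        rw [fullSeries_of_le φ hβ1] at hx
        rw [fullSeries_of_le φ hβω]
        obtain ⟨hx1, n, hn, hp⟩ := hx
        have hright : (x * g * x⁻¹ * g⁻¹).right = 1 := by
          simp only [mul_right, inv_right]
          exact hHcomm x.right g.right
        have hleft := comm_left φ x g hx1
        rcases inv_aut_apply α hα (g.right).2 x.left⁻¹ with h | h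
        · -- acts trivially: commutator is 1
          refine ⟨hright, 0, zero_le, ?_⟩
          rw [hleft, show (φ g.right) x.left⁻¹ = x.left⁻¹ from h]
          simp
        · -- acts by inversion: commutator left is x.left ^ 2
          have hleft2 : (x * g * x⁻¹ * g⁻¹).left = x.left ^ 2 := by
            rw [hleft, show (φ g.right) x.left⁻¹ = x.left⁻¹⁻¹ from h, inv_inv, ← sq]
          rcases n with _ | m
          · -- n = 0 : x.left = 1
            simp only [pow_zero, pow_one] at hp
            refine ⟨hright, 0, zero_le, ?_⟩
            rw [hleft2, hp]
            simp
          · refine ⟨hright, m, ?_, ?_⟩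
            · have : ((m : Ordinal) + 1) ≤ β + 1 := by
                rw [show ((m : Ordinal) + 1) = ((m + 1 : ℕ) : Ordinal) by push_cast; ring]
                exact hn
              rw [Ordinal.add_one_eq_succ, Ordinal.add_one_eq_succ] at this
              exact Order.succ_le_succ_iff.mp this
            · rw [hleft2, ← pow_mul, show 2 * 2 ^ m = 2 ^ (m + 1) from (pow_succ' 2 m).symm]
              exact hp
      · -- β = ω
        rw [fullSeries_of_le φ le_rfl]
        have hright : (x * g * x⁻¹ * g⁻¹).right = 1 := by
          simp only [mul_right, inv_right]
          exact hHcomm x.right g.right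
        obtain ⟨n, hn⟩ := h2 (x * g * x⁻¹ * g⁻¹).left
        exact ⟨hright, n, (Ordinal.nat_lt_omega0 n).le, hn⟩
    · -- limit continuity
      intro β hβ hlim
      have hβω : β = Ordinal.omega0 := by
        have hne : β ≠ Ordinal.omega0 + 1 := by
          intro hEq
          have h1 : Ordinal.omega0 < β := hEq ▸ lt_add_one _
          have := hlim.succ_lt h1
          rw [← Ordinal.add_one_eq_succ, ← hEq] at this
          exact absurd this (lt_irrefl _)
        have hβlt : β < Ordinal.omega0 + 1 := lt_of_le_of_ne hβ hne
        have hβle : β ≤ Ordinal.omega0 := by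
          rw [Ordinal.add_one_eq_succ] at hβlt
          exact Order.lt_succ_iff.mp hβlt
        exact le_antisymm hβle (Ordinal.omega0_le_of_isSuccLimit hlim)
      subst hβω
      rw [fullSeries_of_le φ le_rfl]
      apply le_antisymm
      · rintro x ⟨h1, n, _, hp⟩
        have hx : x ∈ fullSeries φ (n : Ordinal) := by
          rw [fullSeries_of_le φ (Ordinal.nat_lt_omega0 n).le]
          exact ⟨h1, n, le_rfl, hp⟩
        exact le_iSup₂ (f := fun (b : Ordinal.{0}) (_ : b < Ordinal.omega0) =>
          fullSeries φ b) (n : Ordinal) (Ordinal.nat_lt_omega0 n) hx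
      · refine iSup₂_le fun b hb => ?_
        rw [fullSeries_of_le φ hb.le]
        exact sdSeries_mono φ hb.le
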